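/- Let m be an odd positive integer. For every C ∈ R, the number of quadruples (X,Y,Z,W) ∈ 𝒯⁴ with X + Y − Z − W = C equals (2^{m+1} − 1)·2^m if C = 0; equals (2^m − 1)·2^m if C ∈ 2R and C ≠ 0; and equals 2^{2m} if C ∉ 2R. -/

import Mathlib

open Polynomial
open scoped Classical

open Polynomial
open scoped Classical

section FiberCount

variable {A B : Type*} [AddCommGroup A] [AddCommGroup B]

lemma fiber_card (h : A →+ B) (u : B) [Decidable (∃ v, h v = u)] :
    Nat.card {v : A // h v = u} = if ∃ v, h v = u then Nat.card h.ker else 0 := by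
  split_ifs with hex
  · obtain ⟨v₀, hv₀⟩ := hex
    refine Nat.card_congr ?_
    exact { toFun := fun v => ⟨v.1 - v₀, by
              simp [AddMonoidHom.mem_ker, map_sub, v.2, hv₀]⟩
            invFun := fun w => ⟨w.1 + v₀, by
              have hw := AddMonoidHom.mem_ker.mp w.2
              simp [map_add, hw, hv₀]⟩
            left_inv := fun v => by simp
            right_inv := fun w => by simp }
  · push_neg at hex
    have : IsEmpty {v : A // h v = u} := ⟨fun v => hex v.1 v.2⟩
    simp [Nat.card_of_isEmpty]

lemma card_ker_mul_card_range (h : A →+ B) :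
    Nat.card h.ker * Nat.card h.range = Nat.card A := by
  rw [AddSubgroup.card_eq_card_quotient_mul_card_addSubgroup h.ker,
    Nat.card_congr (QuotientAddGroup.quotientKerEquivRange h).toEquiv, mul_comm]

lemma card_ker_mul_card_of_surj (h : A →+ B) (hs : Function.Surjective h) :
    Nat.card h.ker * Nat.card B = Nat.card A := by
  rw [AddSubgroup.card_eq_card_quotient_mul_card_addSubgroup h.ker,
    Nat.card_congr (QuotientAddGroup.quotientKerEquivOfSurjective h hs).toEquiv, mul_comm]

end FiberCount

section Kcount

variable {K : Type*} [Field K] [Fintype K]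

/-- The additive map `x ↦ x² + bx` on a field with `2 = 0`. -/
def psi (h2 : (2:K) = 0) (b : K) : K →+ K where
  toFun x := x * x + b * x
  map_zero' := by ring
  map_add' x y := by linear_combination x * y * h2

lemma psi_apply (h2 : (2:K) = 0) (b x : K) : psi h2 b x = x * x + b * x := rfl

lemma sq_inj (h2 : (2:K) = 0) : Function.Injective (fun x : K => x * x) := by
  intro a b hab
  simp only at hab
  have h : (a + b) * (a + b) = 0 := by linear_combination hab + (a * b + b * b) * h2
  have : a + b = 0 := by
    rcases mul_eq_zero.1 h with h' | h' <;> exact h'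
  linear_combination this - b * h2

lemma sq_surj (h2 : (2:K) = 0) : Function.Surjective (fun x : K => x * x) :=
  Finite.surjective_of_injective (sq_inj h2)

lemma psi_ker_card (h2 : (2:K) = 0) {b : K} (hb : b ≠ 0) :
    Nat.card (psi h2 b).ker = 2 := by
  have hset : ((psi h2 b).ker : Set K) = {0, b} := by
    ext t
    simp only [SetLike.mem_coe, AddMonoidHom.mem_ker, psi_apply, Set.mem_insert_iff,
      Set.mem_singleton_iff]
    constructor
    · intro ht
      have : t * (t + b) = 0 := by linear_combination ht
      rcases mul_eq_zero.1 this with h' | h'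
      · exact Or.inl h'
      · right; linear_combination h' - b * h2
    · intro ht
      rcases ht with h' | h'
      · rw [h']; ring
      · rw [h']; linear_combination b * b * h2
  have : Nat.card ((psi h2 b).ker : Set K) = 2 := by
    rw [hset, Nat.card_coe_set_eq, Set.ncard_pair (Ne.symm hb)]
  simpa using this

end Kcount

section KcountMain

variable {K : Type*} [Field K] [Fintype K]

/-- The combined additive map `(x, z) ↦ ψ_s(x) + ψ_{s+c0}(z)`. -/
def Hmap (h2 : (2:K) = 0) (c0 s : K) : K × K →+ K :=
  (psi h2 s).comp (AddMonoidHom.fst K K) + (psi h2 (s + c0)).comp (AddMonoidHom.snd K K)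

lemma Hmap_apply (h2 : (2:K) = 0) (c0 s : K) (xz : K × K) :
    Hmap h2 c0 s xz = (xz.1 * xz.1 + s * xz.1) + (xz.2 * xz.2 + (s + c0) * xz.2) := rfl

lemma Hmap_surj (h2 : (2:K) = 0) {c0 : K} (hc0 : c0 ≠ 0) (s : K) :
    Function.Surjective (Hmap h2 c0 s) := by
  intro v
  refine ⟨(v * c0⁻¹, v * c0⁻¹), ?_⟩
  rw [Hmap_apply]
  have hcc : c0 * (v * c0⁻¹) = v := by field_simp
  linear_combination ((v * c0⁻¹) * (v * c0⁻¹) + s * (v * c0⁻¹)) * h2 + hcc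

lemma Hmap_zero_zero_surj (h2 : (2:K) = 0) :
    Function.Surjective (Hmap h2 0 0) := by
  intro v
  obtain ⟨x, hx⟩ := sq_surj h2 v
  refine ⟨(x, 0), ?_⟩
  rw [Hmap_apply]
  simpa using hx

lemma Hmap_range (h2 : (2:K) = 0) (s : K) (v : K) :
    (∃ xz : K × K, Hmap h2 0 s xz = v) ↔ v ∈ (psi h2 s).range := by
  constructor
  · rintro ⟨⟨x, z⟩, hxz⟩
    have hx : psi h2 s x ∈ (psi h2 s).range := ⟨x, rfl⟩
    have hz : psi h2 (s + 0) z ∈ (psi h2 s).range := by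
      rw [add_zero]; exact ⟨z, rfl⟩
    have := AddSubgroup.add_mem _ hx hz
    rwa [show psi h2 s x + psi h2 (s + 0) z = v from hxz] at this
  · rintro ⟨t, ht⟩
    exact ⟨(t, 0), by rw [Hmap_apply]; rw [← ht]; simp [psi_apply]⟩

lemma card_prod_KK : Nat.card (K × K) = Fintype.card K * Fintype.card K := by
  simp [Nat.card_eq_fintype_card]

lemma Hmap_ker_card_of_surj (h2 : (2:K) = 0) (c0 s : K)
    (hs : Function.Surjective (Hmap h2 c0 s)) :
    Nat.card (Hmap h2 c0 s).ker = Fintype.card K := by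
  have h1 := card_ker_mul_card_of_surj _ hs
  rw [card_prod_KK, Nat.card_eq_fintype_card (α := K)] at h1
  have hqpos : 0 < Fintype.card K := Fintype.card_pos
  exact Nat.eq_of_mul_eq_mul_right hqpos h1

lemma psi_range_card (h2 : (2:K) = 0) {s : K} (hs : s ≠ 0) :
    2 * Nat.card (psi h2 s).range = Fintype.card K := by
  have := card_ker_mul_card_range (psi h2 s)
  rwa [psi_ker_card h2 hs, Nat.card_eq_fintype_card (α := K)] at this

lemma Hmap_zero_range_eq (h2 : (2:K) = 0) (s : K) :
    (Hmap h2 0 s).range = (psi h2 s).range := by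
  ext v
  rw [AddMonoidHom.mem_range]
  exact Hmap_range h2 s v

lemma Hmap_zero_ker_card (h2 : (2:K) = 0) {s : K} (hs : s ≠ 0) :
    Nat.card (Hmap h2 0 s).ker = 2 * Fintype.card K := by
  have h1 := card_ker_mul_card_range (Hmap h2 0 s)
  rw [card_prod_KK] at h1
  rw [Hmap_zero_range_eq] at h1
  have h2r := psi_range_card h2 hs
  have hrpos : 0 < Nat.card (psi h2 s).range := by
    have : (0:K) ∈ (psi h2 s).range := ⟨0, map_zero _⟩
    exact Nat.card_pos
  apply Nat.eq_of_mul_eq_mul_right hrpos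
  calc Nat.card (Hmap h2 0 s).ker * Nat.card (psi h2 s).range
      = Fintype.card K * Fintype.card K := h1
    _ = (2 * Nat.card (psi h2 s).range) * (2 * Nat.card (psi h2 s).range) := by rw [h2r]
    _ = (2 * Fintype.card K) * Nat.card (psi h2 s).range := by rw [← h2r]; ring

end KcountMain
section CountK

variable {K : Type*} [Field K] [Fintype K]

noncomputable def pair_equiv (h2 : (2:K) = 0) {γ : K} (hγ : γ ≠ 0) :
    {st : K × K // st.1 ≠ 0 ∧ psi h2 st.1 st.2 = γ} ≃ {t : K // t ≠ 0 ∧ t * t ≠ γ} where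
  toFun st := ⟨st.1.2, by
    obtain ⟨⟨s, t⟩, hs, hst⟩ := st
    rw [psi_apply] at hst
    simp only
    have ht0 : t ≠ 0 := by rintro rfl; exact hγ (by linear_combination -hst)
    refine ⟨ht0, fun h => ?_⟩
    have hst0 : s * t = 0 := by linear_combination hst - h
    rcases mul_eq_zero.1 hst0 with h' | h'
    · exact hs h'
    · exact ht0 h'⟩
  invFun t := ⟨((γ - t.1 * t.1) * t.1⁻¹, t.1), by
    obtain ⟨t, ht0, htγ⟩ := t
    simp only
    refine ⟨mul_ne_zero (sub_ne_zero.2 (Ne.symm htγ)) (inv_ne_zero ht0), ?_⟩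
    rw [psi_apply]
    have hinv : t⁻¹ * t = 1 := inv_mul_cancel₀ ht0
    linear_combination (γ - t * t) * hinv⟩
  left_inv st := by
    obtain ⟨⟨s, t⟩, hs, hst⟩ := st
    rw [psi_apply] at hst
    apply Subtype.ext
    simp only [Prod.mk.injEq]
    have ht0 : t ≠ 0 := by rintro rfl; exact hγ (by linear_combination -hst)
    have hinv : t⁻¹ * t = 1 := inv_mul_cancel₀ ht0
    have e : (γ - t * t) * t⁻¹ = s := by linear_combination (-(t⁻¹)) * hst + s * hinv
    simp [Prod.mk.injEq, e]
  right_inv t := by apply Subtype.ext; rfl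

lemma card_pairs_eq (h2 : (2:K) = 0) {γ : K} (hγ : γ ≠ 0) :
    Nat.card {st : K × K // st.1 ≠ 0 ∧ psi h2 st.1 st.2 = γ} = Fintype.card K - 2 := by
  rw [Nat.card_congr (pair_equiv h2 hγ)]
  obtain ⟨c, hc⟩ := sq_surj h2 γ
  simp only at hc
  have hcne : c ≠ 0 := fun h => hγ (by rw [← hc, h]; ring)
  have hpred : ∀ t : K, (t ≠ 0 ∧ t * t ≠ γ) ↔ ¬ (t = 0 ∨ t * t = γ) := by
    intro t; push_neg; rfl
  rw [Nat.card_congr (Equiv.subtypeEquivRight hpred), Nat.card_eq_fintype_card,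
    Fintype.card_subtype_compl]
  have hmem : ∀ t : K, (t = 0 ∨ t * t = γ) ↔ t ∈ ({0, c} : Set K) := by
    intro t
    simp only [Set.mem_insert_iff, Set.mem_singleton_iff]
    constructor
    · rintro (rfl | h)
      · exact Or.inl rfl
      · exact Or.inr (sq_inj h2 (h.trans hc.symm))
    · rintro (rfl | rfl)
      · exact Or.inl rfl
      · exact Or.inr hc
  have h2card : Fintype.card {t : K // t = 0 ∨ t * t = γ} = 2 := by
    rw [← Nat.card_eq_fintype_card, Nat.card_congr (Equiv.subtypeEquivRight hmem)]
    have : Nat.card ({0, c} : Set K) = 2 := by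
      rw [Nat.card_coe_set_eq, Set.ncard_pair (Ne.symm hcne)]
    exact this
  rw [h2card]

lemma countK (h2 : (2:K) = 0) (c0 γ : K) :
    Nat.card {v : K × K × K × K // v.1 + v.2.1 + v.2.2.1 + v.2.2.2 = c0 ∧
      (v.1 + v.2.1) * (v.2.2.1 + v.2.2.2) + v.1 * v.2.1 + v.2.2.1 * v.2.2.2 +
        (v.2.2.1 + v.2.2.2) ^ 2 = γ} =
    if c0 = 0 then
      (if γ = 0 then (2 * Fintype.card K - 1) * Fintype.card K
       else (Fintype.card K - 1) * Fintype.card K)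
    else Fintype.card K * Fintype.card K := by
  have hq2 : 2 ≤ Fintype.card K := Fintype.one_lt_card
  have E1 : {v : K × K × K × K // v.1 + v.2.1 + v.2.2.1 + v.2.2.2 = c0 ∧
      (v.1 + v.2.1) * (v.2.2.1 + v.2.2.2) + v.1 * v.2.1 + v.2.2.1 * v.2.2.2 +
        (v.2.2.1 + v.2.2.2) ^ 2 = γ} ≃
      {u : K × K × K // Hmap h2 c0 u.1 u.2 = γ + u.1 * c0 + c0 * c0} :=
    { toFun := fun v => ⟨(v.1.1 + v.1.2.1, (v.1.1, v.1.2.2.1)), by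
        obtain ⟨⟨x, y, z, w⟩, h1, hQ⟩ := v
        simp only at h1 hQ ⊢
        rw [Hmap_apply]
        have hw : w = c0 - x - y - z := by linear_combination h1
        subst hw
        linear_combination hQ + (x^2 + x*z + y*z + z^2 - c0^2) * h2⟩
      invFun := fun u => ⟨(u.1.2.1, u.1.1 + u.1.2.1, u.1.2.2, u.1.1 + u.1.2.2 + c0), by
        obtain ⟨⟨s, x, z⟩, hu⟩ := u
        rw [Hmap_apply] at hu
        simp only at hu ⊢
        constructor
        · linear_combination (s + z + x) * h2
        · linear_combination hu +
            (s^2 + 2*c0*s + c0^2 + 3*z*s + 2*z*c0 + 2*z^2 + x*s + x*c0 + 2*x*z) * h2⟩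
      left_inv := fun v => by
        obtain ⟨⟨x, y, z, w⟩, h1, hQ⟩ := v
        apply Subtype.ext
        have e2 : x + y + x = y := by linear_combination x * h2
        have e4 : x + y + z + c0 = w := by linear_combination h1 + (c0 - w) * h2
        simp [Prod.mk.injEq, e2, e4]
      right_inv := fun u => by
        obtain ⟨⟨s, x, z⟩, hu⟩ := u
        apply Subtype.ext
        have e1 : x + (s + x) = s := by linear_combination x * h2
        simp [Prod.mk.injEq, e1] }
  rw [Nat.card_congr (E1.trans (Equiv.subtypeProdEquivSigmaSubtype
    (fun (s : K) (xz : K × K) => Hmap h2 c0 s xz = γ + s * c0 + c0 * c0)))]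
  rw [Nat.card_eq_fintype_card, Fintype.card_sigma]
  have hsummand : ∀ s : K,
      Fintype.card {xz : K × K // Hmap h2 c0 s xz = γ + s * c0 + c0 * c0}
      = if ∃ xz : K × K, Hmap h2 c0 s xz = γ + s * c0 + c0 * c0
          then Nat.card (Hmap h2 c0 s).ker else 0 := by
    intro s; rw [← Nat.card_eq_fintype_card]; exact fiber_card _ _
  rw [Finset.sum_congr rfl (fun s _ => hsummand s)]
  by_cases hc0 : c0 = 0
  · subst hc0
    rw [if_pos rfl]
    simp only [mul_zero, add_zero]
    rw [← Finset.sum_erase_add Finset.univ _ (Finset.mem_univ (0:K))]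
    have hzero : (if ∃ xz : K × K, Hmap h2 0 0 xz = γ then Nat.card (Hmap h2 0 0).ker else 0)
        = Fintype.card K := by
      rw [if_pos (Hmap_zero_zero_surj h2 γ)]
      exact Hmap_ker_card_of_surj h2 0 0 (Hmap_zero_zero_surj h2)
    rw [hzero]
    have herase : ∀ s ∈ Finset.univ.erase (0:K),
        (if ∃ xz : K × K, Hmap h2 0 s xz = γ then Nat.card (Hmap h2 0 s).ker else 0)
        = if γ ∈ (psi h2 s).range then 2 * Fintype.card K else 0 := by
      intro s hs
      have hs0 : s ≠ 0 := Finset.ne_of_mem_erase hs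
      by_cases hmem : γ ∈ (psi h2 s).range
      · rw [if_pos ((Hmap_range h2 s γ).2 hmem), if_pos hmem, Hmap_zero_ker_card h2 hs0]
      · rw [if_neg (fun hex => hmem ((Hmap_range h2 s γ).1 hex)), if_neg hmem]
    rw [Finset.sum_congr rfl herase]
    by_cases hγ : γ = 0
    · subst hγ
      rw [if_pos rfl]
      have hall : ∀ s ∈ Finset.univ.erase (0:K),
          (if (0:K) ∈ (psi h2 s).range then 2 * Fintype.card K else 0)
          = 2 * Fintype.card K := fun s _ => if_pos ⟨0, map_zero _⟩
      rw [Finset.sum_congr rfl hall, Finset.sum_const,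
        Finset.card_erase_of_mem (Finset.mem_univ _), Finset.card_univ, smul_eq_mul]
      have h1q : 1 ≤ Fintype.card K := le_trans one_le_two hq2
      have h12q : 1 ≤ 2 * Fintype.card K := by omega
      zify [h1q, h12q]
      ring
    · rw [if_neg hγ]
      rw [← Finset.sum_filter]
      rw [Finset.sum_const, smul_eq_mul]
      set M := ((Finset.univ.erase (0:K)).filter (fun s => γ ∈ (psi h2 s).range)).card with hM
      -- pair counting: 2 * M = q - 2
      have hA : Nat.card {st : K × K // st.1 ≠ 0 ∧ psi h2 st.1 st.2 = γ} = 2 * M := by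
        rw [Nat.card_congr (Equiv.subtypeProdEquivSigmaSubtype
          (fun (s : K) (t : K) => s ≠ 0 ∧ psi h2 s t = γ))]
        rw [Nat.card_eq_fintype_card, Fintype.card_sigma]
        have hper : ∀ s : K, Fintype.card {t : K // s ≠ 0 ∧ psi h2 s t = γ}
            = if s ≠ 0 ∧ γ ∈ (psi h2 s).range then 2 else 0 := by
          intro s
          by_cases hs : s = 0
          · subst hs
            rw [if_neg (by simp)]
            rw [Fintype.card_eq_zero_iff]
            exact ⟨fun t => t.2.1 rfl⟩
          · by_cases hmem : γ ∈ (psi h2 s).range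
            · rw [if_pos ⟨hs, hmem⟩, ← Nat.card_eq_fintype_card,
                Nat.card_congr (Equiv.subtypeEquivRight (fun t => and_iff_right hs)),
                fiber_card, if_pos (AddMonoidHom.mem_range.1 hmem)]
              exact psi_ker_card h2 hs
            · rw [if_neg (fun h => hmem h.2), Fintype.card_eq_zero_iff]
              exact ⟨fun t => hmem ⟨t.1, t.2.2⟩⟩
        rw [Finset.sum_congr rfl (fun s _ => hper s)]
        rw [← Finset.sum_filter, Finset.sum_const, smul_eq_mul]
        have hfe : Finset.univ.filter (fun s : K => s ≠ 0 ∧ γ ∈ (psi h2 s).range)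
            = (Finset.univ.erase (0:K)).filter (fun s => γ ∈ (psi h2 s).range) := by
          ext s
          simp only [Finset.mem_filter, Finset.mem_erase, Finset.mem_univ, true_and]
          tauto
        rw [hfe, ← hM, mul_comm]
      have hB := card_pairs_eq h2 hγ
      have hM2 : 2 * M = Fintype.card K - 2 := by rw [← hA, hB]
      have h1q : 1 ≤ Fintype.card K := le_trans one_le_two hq2
      zify [h1q, hq2] at hM2 ⊢
      linear_combination (Fintype.card K : ℤ) * hM2
  · rw [if_neg hc0]
    have hall : ∀ s ∈ (Finset.univ : Finset K),
        (if ∃ xz : K × K, Hmap h2 c0 s xz = γ + s * c0 + c0 * c0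
          then Nat.card (Hmap h2 c0 s).ker else 0) = Fintype.card K := by
      intro s _
      rw [if_pos (Hmap_surj h2 hc0 s (γ + s * c0 + c0 * c0))]
      exact Hmap_ker_card_of_surj h2 c0 s (Hmap_surj h2 hc0 s)
    rw [Finset.sum_congr rfl hall, Finset.sum_const, Finset.card_univ, smul_eq_mul]

end CountK
section Binomial

lemma sq_zero_add_pow {A : Type*} [CommRing A] {b : A} (hb : b * b = 0) (a : A) :
    ∀ n : ℕ, (a + b) ^ (n + 1) = a ^ (n + 1) + (n + 1 : ℕ) * a ^ n * b := by
  intro n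
  induction n with
  | zero => push_cast; ring
  | succ n ih =>
    have h : (a + b) ^ (n + 1 + 1) = (a + b) * ((a + b) ^ (n + 1)) := by ring
    rw [h, ih]
    push_cast
    linear_combination (((n : A) + 1) * a ^ n) * hb

end Binomial

/-- Abstract setup for the Galois ring `GR(4,m)`: a reduction map onto the residue field. -/
structure GRSetup (R K : Type*) [CommRing R] [Field K] where
  π : R →+* K
  surj : Function.Surjective π
  two_mul_two : (2 : R) * 2 = 0
  ker_iff : ∀ x : R, π x = 0 ↔ ∃ y, x = 2 * y
  ann : ∀ x : R, 2 * x = 0 → ∃ y, x = 2 * y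

namespace GRSetup

variable {R K : Type*} [CommRing R] [Fintype R] [Field K] [Fintype K] (S : GRSetup R K)

include S

lemma four_mul_zero (r : R) : 4 * r = 0 := by linear_combination r * S.two_mul_two

lemma two_K : (2 : K) = 0 := by
  have h : S.π 2 = 0 := (S.ker_iff 2).2 ⟨1, (mul_one 2).symm⟩
  rwa [map_ofNat] at h

lemma charPK : CharP K 2 := by
  have hdvd : ringChar K ∣ 2 := by
    have h2 : ((2 : ℕ) : K) = 0 := by exact_mod_cast S.two_K
    exact (CharP.cast_eq_zero_iff K (ringChar K) 2).1 h2
  rcases (Nat.prime_two.eq_one_or_self_of_dvd (ringChar K) hdvd) with h | h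
  · exact absurd h CharP.ringChar_ne_one
  · rw [← h]; exact ringChar.charP K

lemma card_K_even : ∃ e, Fintype.card K = 2 * e := by
  haveI := S.charPK
  obtain ⟨n, -, hcard⟩ := FiniteField.card K 2
  refine ⟨2 ^ ((n : ℕ) - 1), ?_⟩
  rw [hcard, ← pow_succ']
  congr 1
  have := n.pos
  omega

lemma two_mul_card (t : R) : (Fintype.card K : R) * (2 * t) = 0 := by
  obtain ⟨e, he⟩ := S.card_K_even
  rw [he]
  push_cast
  linear_combination (e : R) * t * S.two_mul_two

lemma pow_card_add_two_mul (x t : R) :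
    (x + 2 * t) ^ Fintype.card K = x ^ Fintype.card K := by
  have hq1 : 1 ≤ Fintype.card K := Fintype.card_pos
  obtain ⟨n, hn⟩ : ∃ n, Fintype.card K = n + 1 := ⟨Fintype.card K - 1, by omega⟩
  have hz := S.two_mul_card (x ^ n * t)
  rw [hn] at hz ⊢
  rw [sq_zero_add_pow (show (2 * t) * (2 * t) = 0 by
    linear_combination t * t * S.two_mul_two) x n]
  push_cast at hz ⊢
  linear_combination hz

lemma nonunit_pow_card {x : R} (hx : S.π x = 0) : x ^ Fintype.card K = 0 := by
  obtain ⟨y, rfl⟩ := (S.ker_iff x).1 hx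
  have hq2 : 2 ≤ Fintype.card K := Fintype.one_lt_card
  obtain ⟨n, hn⟩ : ∃ n, Fintype.card K = n + 2 := ⟨Fintype.card K - 2, by omega⟩
  rw [hn, pow_add]
  have h0 : (2 * y) ^ 2 = 0 := by linear_combination y * y * S.two_mul_two
  rw [h0, mul_zero]

lemma isUnit_iff (x : R) : IsUnit x ↔ S.π x ≠ 0 := by
  constructor
  · rintro ⟨u, rfl⟩ h
    have hmul : (u : R) * ((u⁻¹ : Rˣ) : R) = 1 := u.mul_inv
    have := congrArg S.π hmul
    rw [map_mul, map_one, h, zero_mul] at this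
    exact zero_ne_one this
  · intro h
    obtain ⟨y, hy⟩ := S.surj (S.π x)⁻¹
    have hxy : S.π (x * y - 1) = 0 := by
      rw [map_sub, map_mul, hy, map_one, mul_inv_cancel₀ h, sub_self]
    obtain ⟨t, ht⟩ := (S.ker_iff _).1 hxy
    refine IsUnit.of_mul_eq_one (a := x) (y * (1 - 2 * t)) ?_
    have hxy' : x * y = 1 + 2 * t := by linear_combination ht
    calc x * (y * (1 - 2 * t)) = (x * y) * (1 - 2 * t) := by ring
      _ = (1 + 2 * t) * (1 - 2 * t) := by rw [hxy']
      _ = 1 := by linear_combination (-(t * t)) * S.two_mul_two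

lemma card_ker_pi : Nat.card (S.π.toAddMonoidHom.ker) = Fintype.card K := by
  have h1 := card_ker_mul_card_of_surj S.π.toAddMonoidHom S.surj
  have h2 := card_ker_mul_card_range (AddMonoidHom.mulLeft (2 : R))
  have hkk : (AddMonoidHom.mulLeft (2 : R)).ker = S.π.toAddMonoidHom.ker := by
    ext x
    simp only [AddMonoidHom.mem_ker, AddMonoidHom.coe_mulLeft, RingHom.toAddMonoidHom_eq_coe,
      AddMonoidHom.coe_coe]
    constructor
    · intro h
      obtain ⟨y, hy⟩ := S.ann x h
      exact (S.ker_iff x).2 ⟨y, hy⟩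
    · intro h
      obtain ⟨y, rfl⟩ := (S.ker_iff x).1 h
      linear_combination y * S.two_mul_two
  have hrk : (AddMonoidHom.mulLeft (2 : R)).range = S.π.toAddMonoidHom.ker := by
    ext x
    simp only [AddMonoidHom.mem_range, AddMonoidHom.coe_mulLeft, AddMonoidHom.mem_ker,
      RingHom.toAddMonoidHom_eq_coe, AddMonoidHom.coe_coe]
    rw [S.ker_iff x]
    constructor
    · rintro ⟨y, rfl⟩; exact ⟨y, rfl⟩
    · rintro ⟨y, rfl⟩; exact ⟨y, rfl⟩
  rw [hkk, hrk] at h2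
  have hpos : 0 < Nat.card (S.π.toAddMonoidHom.ker) := Nat.card_pos
  apply Nat.eq_of_mul_eq_mul_left hpos
  rw [h2, ← Nat.card_eq_fintype_card (α := K)]
  exact h1.symm

lemma card_R : Nat.card R = Fintype.card K * Fintype.card K := by
  have h1 := card_ker_mul_card_of_surj S.π.toAddMonoidHom S.surj
  rw [S.card_ker_pi, Nat.card_eq_fintype_card (α := K)] at h1
  exact h1.symm

lemma card_units : Nat.card Rˣ = Fintype.card K * Fintype.card K - Fintype.card K := by
  have e1 : Nat.card Rˣ = Nat.card {x : R // IsUnit x} :=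
    Nat.card_congr
      { toFun := fun u => ⟨(u : R), u.isUnit⟩
        invFun := fun x => x.2.unit
        left_inv := fun u => Units.ext u.isUnit.unit_spec
        right_inv := fun x => Subtype.ext x.2.unit_spec }
  have e2 : Nat.card {x : R // IsUnit x} = Nat.card {x : R // ¬ (S.π x = 0)} :=
    Nat.card_congr (Equiv.subtypeEquivRight (fun x => S.isUnit_iff x))
  have e3 : Nat.card {x : R // ¬ (S.π x = 0)} = Nat.card R - Nat.card {x : R // S.π x = 0} := by
    rw [Nat.card_eq_fintype_card, Nat.card_eq_fintype_card, Nat.card_eq_fintype_card]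
    exact Fintype.card_subtype_compl _
  have e4 : Nat.card {x : R // S.π x = 0} = Fintype.card K := by
    rw [← S.card_ker_pi]
    exact Nat.card_congr (Equiv.subtypeEquivRight (fun x => Iff.symm AddMonoidHom.mem_ker))
  rw [e1, e2, e3, e4, S.card_R]

lemma pow_card_sq (x : R) :
    x ^ (Fintype.card K * Fintype.card K) = x ^ Fintype.card K := by
  by_cases hx : IsUnit x
  · obtain ⟨u, rfl⟩ := hx
    have h2 : u ^ (Fintype.card K * Fintype.card K - Fintype.card K) = 1 := by
      rw [← S.card_units]; exact pow_card_eq_one'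
    have hqq : Fintype.card K ≤ Fintype.card K * Fintype.card K :=
      Nat.le_mul_of_pos_left _ Fintype.card_pos
    have h1 : u ^ (Fintype.card K * Fintype.card K) = u ^ Fintype.card K := by
      calc u ^ (Fintype.card K * Fintype.card K)
          = u ^ (Fintype.card K + (Fintype.card K * Fintype.card K - Fintype.card K)) := by
            congr 1; omega
        _ = u ^ Fintype.card K * u ^ (Fintype.card K * Fintype.card K - Fintype.card K) :=
            pow_add u _ _
        _ = u ^ Fintype.card K := by rw [h2, mul_one]
    calc (u : R) ^ (Fintype.card K * Fintype.card K)
        = ((u ^ (Fintype.card K * Fintype.card K) : Rˣ) : R) := by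
          rw [Units.val_pow_eq_pow_val]
      _ = ((u ^ Fintype.card K : Rˣ) : R) := by rw [h1]
      _ = (u : R) ^ Fintype.card K := Units.val_pow_eq_pow_val _ _
  · have h0 : S.π x = 0 := by
      by_contra h
      exact hx ((S.isUnit_iff x).2 h)
    rw [pow_mul, S.nonunit_pow_card h0, zero_pow Fintype.card_pos.ne']

/-- The Teichmüller lift. -/
noncomputable def teich (a : K) : R := (Function.surjInv S.surj a) ^ Fintype.card K

lemma π_teich (a : K) : S.π (S.teich a) = a := by
  rw [teich, map_pow, Function.surjInv_eq S.surj a, FiniteField.pow_card]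

lemma pow_card_eq_of_π_eq {x y : R} (h : S.π x = S.π y) :
    x ^ Fintype.card K = y ^ Fintype.card K := by
  have h0 : S.π (x - y) = 0 := by rw [map_sub, h, sub_self]
  obtain ⟨t, ht⟩ := (S.ker_iff _).1 h0
  have hx : x = y + 2 * t := by linear_combination ht
  rw [hx, S.pow_card_add_two_mul]

lemma teich_pow_card (a : K) : S.teich a ^ Fintype.card K = S.teich a := by
  rw [teich, ← pow_mul, S.pow_card_sq]

lemma teich_π {z : R} (hz : z ^ Fintype.card K = z) : S.teich (S.π z) = z := by
  have h := S.pow_card_eq_of_π_eq (x := Function.surjInv S.surj (S.π z)) (y := z)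
    (Function.surjInv_eq S.surj (S.π z))
  rw [teich, h, hz]

lemma teich_mul (a b : K) : S.teich a * S.teich b = S.teich (a * b) := by
  have hT : (S.teich a * S.teich b) ^ Fintype.card K = S.teich a * S.teich b := by
    rw [mul_pow, S.teich_pow_card, S.teich_pow_card]
  have h := S.teich_π hT
  rw [map_mul, S.π_teich, S.π_teich] at h
  exact h.symm

lemma teich_zero : S.teich 0 = 0 := by
  have h0 : (0 : R) ^ Fintype.card K = 0 := zero_pow Fintype.card_pos.ne'
  have := S.teich_π h0
  rwa [map_zero] at this

lemma two_mul_teich_π (u : R) : 2 * u = 2 * S.teich (S.π u) := by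
  have h0 : S.π (u - S.teich (S.π u)) = 0 := by rw [map_sub, S.π_teich, sub_self]
  obtain ⟨t, ht⟩ := (S.ker_iff _).1 h0
  linear_combination 2 * ht + t * S.two_mul_two

lemma two_teich_inj {a b : K} (h : 2 * S.teich a = 2 * S.teich b) : a = b := by
  have h0 : 2 * (S.teich a - S.teich b) = 0 := by linear_combination h
  obtain ⟨y, hy⟩ := S.ann _ h0
  have hπ : S.π (S.teich a - S.teich b) = 0 := (S.ker_iff _).2 ⟨y, hy⟩
  rw [map_sub, S.π_teich, S.π_teich, sub_eq_zero] at hπ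
  exact hπ

lemma exists_bpart (x : R) : ∃ b : K, x = S.teich (S.π x) + 2 * S.teich b := by
  have h0 : S.π (x - S.teich (S.π x)) = 0 := by rw [map_sub, S.π_teich, sub_self]
  obtain ⟨t, ht⟩ := (S.ker_iff _).1 h0
  refine ⟨S.π t, ?_⟩
  have h2 := S.two_mul_teich_π t
  linear_combination ht + h2

/-- The "2-part" of an element of `R`. -/
noncomputable def bpart (x : R) : K := Classical.choose (S.exists_bpart x)

lemma bpart_spec (x : R) : x = S.teich (S.π x) + 2 * S.teich (S.bpart x) :=
  Classical.choose_spec (S.exists_bpart x)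

/-- The "carry" of Teichmüller addition. -/
noncomputable def dd (a b : K) : K := S.bpart (S.teich a + S.teich b)

lemma teich_add (a b : K) :
    S.teich a + S.teich b = S.teich (a + b) + 2 * S.teich (S.dd a b) := by
  have h := S.bpart_spec (S.teich a + S.teich b)
  rwa [map_add, S.π_teich, S.π_teich] at h

lemma two_teich_add (u v : K) :
    2 * S.teich u + 2 * S.teich v = 2 * S.teich (u + v) := by
  have E := S.teich_add u v
  linear_combination 2 * E + S.four_mul_zero (S.teich (S.dd u v))

lemma rep_unique {a b a' b' : K}
    (h : S.teich a + 2 * S.teich b = S.teich a' + 2 * S.teich b') : a = a' ∧ b = b' := by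
  have hπ := congrArg S.π h
  simp only [map_add, map_mul, S.π_teich, map_ofNat, S.two_K, zero_mul, add_zero] at hπ
  refine ⟨hπ, S.two_teich_inj ?_⟩
  rw [hπ] at h
  exact add_left_cancel h

lemma dd_sq' (a b : K) : S.dd (a * a) (b * b) = a * b := by
  have E1 := S.teich_add a b
  have E2 := S.teich_add (a * a) (b * b)
  have haa := S.teich_mul a a
  have hbb := S.teich_mul b b
  have hab := S.teich_mul a b
  have hsq := S.teich_mul (a + b) (a + b)
  rw [show (a + b) * (a + b) = a * a + b * b by linear_combination a * b * S.two_K] at hsq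
  have Esq : (S.teich a + S.teich b) * (S.teich a + S.teich b)
      = (S.teich (a + b) + 2 * S.teich (S.dd a b)) *
        (S.teich (a + b) + 2 * S.teich (S.dd a b)) := by
    linear_combination (S.teich a + S.teich b + S.teich (a + b) + 2 * S.teich (S.dd a b)) * E1
  have H4 := S.four_mul_zero (S.teich (a * b) - S.teich (a + b) * S.teich (S.dd a b)
    - S.teich (S.dd a b) * S.teich (S.dd a b))
  have hmain : 2 * S.teich (a * b) = 2 * S.teich (S.dd (a * a) (b * b)) := by
    linear_combination (-1 : R) * Esq + haa + hbb + 2 * hab - hsq + E2 + H4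
  exact (S.two_teich_inj hmain).symm

lemma dd_sq (a b : K) : S.dd a b * S.dd a b = a * b := by
  obtain ⟨α, hα⟩ := sq_surj S.two_K a
  obtain ⟨β, hβ⟩ := sq_surj S.two_K b
  simp only at hα hβ
  rw [← hα, ← hβ, S.dd_sq' α β]
  ring

lemma main_identity (x y z w : K) :
    S.teich x + S.teich y - S.teich z - S.teich w =
      S.teich (x + y + z + w) +
        2 * S.teich (S.dd x y + S.dd z w + (z + w) + S.dd (x + y) (z + w)) := by
  have E1 := S.teich_add x y
  have E2 := S.teich_add z w
  have E3 := S.teich_add (x + y) (z + w)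
  rw [show (x + y) + (z + w) = x + y + z + w by ring] at E3
  have A1 := S.two_teich_add (S.dd x y) (S.dd z w)
  have A2 := S.two_teich_add (S.dd x y + S.dd z w) (z + w)
  have A3 := S.two_teich_add (S.dd x y + S.dd z w + (z + w)) (S.dd (x + y) (z + w))
  have H4 := S.four_mul_zero (S.teich (z + w) + S.teich (S.dd z w))
  linear_combination E1 - E2 + E3 + A1 + A2 + A3 - H4

lemma cond_iff (C : R) (x y z w : K) :
    S.teich x + S.teich y - S.teich z - S.teich w = C ↔
    (x + y + z + w = S.π C ∧
      (x + y) * (z + w) + x * y + z * w + (z + w) ^ 2 = S.bpart C * S.bpart C) := by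
  have hee : (S.dd x y + S.dd z w + (z + w) + S.dd (x + y) (z + w)) *
      (S.dd x y + S.dd z w + (z + w) + S.dd (x + y) (z + w))
      = (x + y) * (z + w) + x * y + z * w + (z + w) ^ 2 := by
    linear_combination S.dd_sq x y + S.dd_sq z w + S.dd_sq (x + y) (z + w) +
      (S.dd x y * S.dd z w + S.dd x y * S.dd (x + y) (z + w) +
        S.dd z w * S.dd (x + y) (z + w) +
        (S.dd x y + S.dd z w + S.dd (x + y) (z + w)) * (z + w)) * S.two_K
  rw [S.main_identity x y z w]
  constructor
  · intro h
    rw [S.bpart_spec C] at h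
    obtain ⟨h1, h2⟩ := S.rep_unique h
    exact ⟨h1, by rw [← hee, h2]⟩
  · rintro ⟨h1, h2⟩
    have he : S.dd x y + S.dd z w + (z + w) + S.dd (x + y) (z + w) = S.bpart C :=
      sq_inj S.two_K (by simpa using hee.trans h2)
    rw [h1, he]
    exact (S.bpart_spec C).symm

lemma bpart_zero : S.bpart 0 = 0 := by
  have h := S.bpart_spec (0 : R)
  rw [map_zero, S.teich_zero, zero_add] at h
  apply S.two_teich_inj
  rw [← h, S.teich_zero, mul_zero]

end GRSetup

namespace GRSetup

variable {R K : Type*} [CommRing R] [Fintype R] [Field K] [Fintype K] (S : GRSetup R K)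

include S in
theorem abstract_count (C : R) :
    Nat.card {t : R × R × R × R // t.1 ^ Fintype.card K = t.1 ∧
      t.2.1 ^ Fintype.card K = t.2.1 ∧ t.2.2.1 ^ Fintype.card K = t.2.2.1 ∧
      t.2.2.2 ^ Fintype.card K = t.2.2.2 ∧ t.1 + t.2.1 - t.2.2.1 - t.2.2.2 = C} =
    if C = 0 then (2 * Fintype.card K - 1) * Fintype.card K
    else if ∃ x : R, C = 2 * x then (Fintype.card K - 1) * Fintype.card K
    else Fintype.card K * Fintype.card K := by
  have E : {t : R × R × R × R // t.1 ^ Fintype.card K = t.1 ∧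
      t.2.1 ^ Fintype.card K = t.2.1 ∧ t.2.2.1 ^ Fintype.card K = t.2.2.1 ∧
      t.2.2.2 ^ Fintype.card K = t.2.2.2 ∧ t.1 + t.2.1 - t.2.2.1 - t.2.2.2 = C} ≃
      {v : K × K × K × K // v.1 + v.2.1 + v.2.2.1 + v.2.2.2 = S.π C ∧
        (v.1 + v.2.1) * (v.2.2.1 + v.2.2.2) + v.1 * v.2.1 + v.2.2.1 * v.2.2.2 +
          (v.2.2.1 + v.2.2.2) ^ 2 = S.bpart C * S.bpart C} :=
    { toFun := fun t => ⟨(S.π t.1.1, S.π t.1.2.1, S.π t.1.2.2.1, S.π t.1.2.2.2), by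
        obtain ⟨⟨a, b, c, d⟩, h1, h2, h3, h4, h5⟩ := t
        simp only
        apply (S.cond_iff C _ _ _ _).1
        rw [S.teich_π h1, S.teich_π h2, S.teich_π h3, S.teich_π h4]
        exact h5⟩
      invFun := fun v => ⟨(S.teich v.1.1, S.teich v.1.2.1, S.teich v.1.2.2.1,
          S.teich v.1.2.2.2), by
        obtain ⟨⟨x, y, z, w⟩, hv⟩ := v
        exact ⟨S.teich_pow_card x, S.teich_pow_card y, S.teich_pow_card z,
          S.teich_pow_card w, (S.cond_iff C x y z w).2 hv⟩⟩
      left_inv := fun t => by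
        obtain ⟨⟨a, b, c, d⟩, h1, h2, h3, h4, h5⟩ := t
        apply Subtype.ext
        have e1 := S.teich_π h1
        have e2 := S.teich_π h2
        have e3 := S.teich_π h3
        have e4 := S.teich_π h4
        simp [Prod.mk.injEq, e1, e2, e3, e4]
      right_inv := fun v => by
        obtain ⟨⟨x, y, z, w⟩, hv⟩ := v
        apply Subtype.ext
        simp [Prod.mk.injEq, S.π_teich] }
  rw [Nat.card_congr E, countK S.two_K (S.π C) (S.bpart C * S.bpart C)]
  by_cases hC : C = 0
  · subst hC
    rw [if_pos rfl, if_pos (map_zero S.π), if_pos (by rw [S.bpart_zero, mul_zero])]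
  · rw [if_neg hC]
    by_cases h2R : ∃ x : R, C = 2 * x
    · have hπC : S.π C = 0 := (S.ker_iff C).2 h2R
      have hb : S.bpart C ≠ 0 := by
        intro hb0
        apply hC
        have h := S.bpart_spec C
        rw [hπC, S.teich_zero, hb0, S.teich_zero, mul_zero, add_zero] at h
        exact h
      rw [if_pos h2R, if_pos hπC, if_neg (mul_ne_zero hb hb)]
    · have hπC : S.π C ≠ 0 := fun h => h2R ((S.ker_iff C).1 h)
      rw [if_neg h2R, if_neg hπC]

end GRSetup

section PolyHelpers

lemma half_lemma (r : Polynomial (ZMod 4)) (hr : ∀ n, 2 * r.coeff n = 0) :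
    ∃ u : Polynomial (ZMod 4), r = Polynomial.C 2 * u := by
  have key : ∀ a : ZMod 4, 2 * a = 0 → 2 * (if a = 2 then 1 else 0 : ZMod 4) = a := by decide
  refine ⟨∑ n ∈ r.support, Polynomial.C (if r.coeff n = 2 then 1 else 0) * Polynomial.X ^ n, ?_⟩
  rw [Finset.mul_sum]
  conv_lhs => rw [r.as_sum_support]
  apply Finset.sum_congr rfl
  intro n _
  rw [← mul_assoc, ← Polynomial.C_mul, key _ (hr n), Polynomial.C_mul_X_pow_eq_monomial]

end PolyHelpers


/-- With `R = GR(4,m)` realized as `(ℤ/4ℤ)[x]/(f)` and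
`𝒯 = {z : z ^ 2^m = z}` the Teichmüller set (`m` odd), for every `C ∈ R` the number of
quadruples `(X,Y,Z,W) ∈ 𝒯⁴` with `X + Y - Z - W = C` equals `(2^(m+1) - 1)·2^m` if `C = 0`,
`(2^m - 1)·2^m` if `C ∈ 2R ∖ {0}`, and `2^(2m)` if `C ∉ 2R`. -/
theorem statement7 (m : ℕ) (hm : Odd m) (hmpos : 0 < m)
    (f : Polynomial (ZMod 4)) (hmonic : f.Monic) (hdeg : f.natDegree = m)
    (hirr : Irreducible (f.map (ZMod.castHom (show (2:ℕ) ∣ 4 by norm_num) (ZMod 2))))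
    (C : AdjoinRoot f) :
    Nat.card {t : AdjoinRoot f × AdjoinRoot f × AdjoinRoot f × AdjoinRoot f //
        t.1 ^ 2 ^ m = t.1 ∧ t.2.1 ^ 2 ^ m = t.2.1 ∧ t.2.2.1 ^ 2 ^ m = t.2.2.1 ∧
        t.2.2.2 ^ 2 ^ m = t.2.2.2 ∧
        t.1 + t.2.1 - t.2.2.1 - t.2.2.2 = C} =
      if C = 0 then (2 ^ (m + 1) - 1) * 2 ^ m
      else if ∃ x : AdjoinRoot f, C = 2 * x then (2 ^ m - 1) * 2 ^ m
      else 2 ^ (2 * m) := by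
  have c2surj : Function.Surjective (ZMod.castHom (show (2:ℕ) ∣ 4 by norm_num) (ZMod 2)) := by
    decide
  have hc2ker : ∀ a : ZMod 4,
      (ZMod.castHom (show (2:ℕ) ∣ 4 by norm_num) (ZMod 2)) a = 0 ↔ 2 * a = 0 := by decide
  have hmonic2 : (f.map (ZMod.castHom (show (2:ℕ) ∣ 4 by norm_num) (ZMod 2))).Monic :=
    hmonic.map _
  haveI : Fact (Irreducible (f.map (ZMod.castHom (show (2:ℕ) ∣ 4 by norm_num) (ZMod 2)))) :=
    ⟨hirr⟩
  haveI : Finite (AdjoinRoot f) :=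
    Finite.of_equiv _ ((AdjoinRoot.powerBasis' hmonic).basis.equivFun.toEquiv).symm
  haveI : Fintype (AdjoinRoot f) := Fintype.ofFinite _
  haveI : Finite (AdjoinRoot (f.map (ZMod.castHom (show (2:ℕ) ∣ 4 by norm_num) (ZMod 2)))) :=
    Finite.of_equiv _ ((AdjoinRoot.powerBasis' hmonic2).basis.equivFun.toEquiv).symm
  haveI : Fintype (AdjoinRoot (f.map (ZMod.castHom (show (2:ℕ) ∣ 4 by norm_num) (ZMod 2)))) :=
    Fintype.ofFinite _
  have hcardK :
      Fintype.card (AdjoinRoot (f.map (ZMod.castHom (show (2:ℕ) ∣ 4 by norm_num) (ZMod 2))))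
        = 2 ^ m := by
    rw [Fintype.card_congr ((AdjoinRoot.powerBasis' hmonic2).basis.equivFun.toEquiv)]
    rw [Fintype.card_fun, ZMod.card, Fintype.card_fin, AdjoinRoot.powerBasis'_dim,
      hmonic.natDegree_map, hdeg]
  -- the reduction ring hom
  have hpf : Polynomial.eval₂
      ((algebraMap (ZMod 2)
          (AdjoinRoot (f.map (ZMod.castHom (show (2:ℕ) ∣ 4 by norm_num) (ZMod 2))))).comp
        (ZMod.castHom (show (2:ℕ) ∣ 4 by norm_num) (ZMod 2)))
      (AdjoinRoot.root (f.map (ZMod.castHom (show (2:ℕ) ∣ 4 by norm_num) (ZMod 2)))) f = 0 := by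
    rw [← Polynomial.eval₂_map, AdjoinRoot.algebraMap_eq]
    exact AdjoinRoot.eval₂_root _
  set π := AdjoinRoot.lift
    ((algebraMap (ZMod 2)
        (AdjoinRoot (f.map (ZMod.castHom (show (2:ℕ) ∣ 4 by norm_num) (ZMod 2))))).comp
      (ZMod.castHom (show (2:ℕ) ∣ 4 by norm_num) (ZMod 2)))
    (AdjoinRoot.root (f.map (ZMod.castHom (show (2:ℕ) ∣ 4 by norm_num) (ZMod 2)))) hpf with hπ
  have hπmk : ∀ p : Polynomial (ZMod 4), π (AdjoinRoot.mk f p)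
      = AdjoinRoot.mk (f.map (ZMod.castHom (show (2:ℕ) ∣ 4 by norm_num) (ZMod 2)))
          (p.map (ZMod.castHom (show (2:ℕ) ∣ 4 by norm_num) (ZMod 2))) := by
    intro p
    rw [hπ, AdjoinRoot.lift_mk, ← Polynomial.eval₂_map, ← Polynomial.aeval_def,
      AdjoinRoot.aeval_eq]
  have hC2 : Polynomial.C (2 : ZMod 4) = (2 : Polynomial (ZMod 4)) := map_ofNat Polynomial.C 2
  have hsurj : Function.Surjective π := by
    intro u
    obtain ⟨p2, rfl⟩ := AdjoinRoot.mk_surjective u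
    obtain ⟨p, hp⟩ := Polynomial.map_surjective _ c2surj p2
    exact ⟨AdjoinRoot.mk f p, by rw [hπmk, hp]⟩
  have h22 : (2 : AdjoinRoot f) * 2 = 0 := by
    have h1 : ((2 : ZMod 4) * 2) = 0 := by decide
    have h2 : (2 : AdjoinRoot f) = algebraMap (ZMod 4) (AdjoinRoot f) (2 : ZMod 4) :=
      (map_ofNat _ 2).symm
    rw [h2, ← map_mul, h1, map_zero]
  have hker : ∀ x : AdjoinRoot f, π x = 0 ↔ ∃ y, x = 2 * y := by
    intro x
    obtain ⟨p, rfl⟩ := AdjoinRoot.mk_surjective x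
    rw [hπmk, AdjoinRoot.mk_eq_zero]
    constructor
    · rintro ⟨g, hg⟩
      obtain ⟨G, hG⟩ := Polynomial.map_surjective _ c2surj g
      have hr : ∀ n, 2 * (p - f * G).coeff n = 0 := by
        intro n
        apply (hc2ker _).1
        rw [← Polynomial.coeff_map, Polynomial.map_sub, Polynomial.map_mul, hG, hg,
          sub_self, Polynomial.coeff_zero]
      obtain ⟨u, hu⟩ := half_lemma _ hr
      refine ⟨AdjoinRoot.mk f u, ?_⟩
      have hp : p = f * G + Polynomial.C 2 * u := by linear_combination hu
      rw [hp, map_add, map_mul, AdjoinRoot.mk_self, zero_mul, zero_add, hC2, map_mul,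
        map_ofNat]
    · rintro ⟨y, hy⟩
      obtain ⟨q, rfl⟩ := AdjoinRoot.mk_surjective y
      have h0 : AdjoinRoot.mk f (p - 2 * q) = 0 := by
        rw [map_sub, map_mul, map_ofNat, hy, sub_self]
      rw [AdjoinRoot.mk_eq_zero] at h0
      obtain ⟨h, hh⟩ := h0
      refine ⟨h.map (ZMod.castHom (show (2:ℕ) ∣ 4 by norm_num) (ZMod 2)), ?_⟩
      have hp : p = f * h + 2 * q := by linear_combination hh
      rw [hp, Polynomial.map_add, Polynomial.map_mul, Polynomial.map_mul]
      have h20 : (Polynomial.map (ZMod.castHom (show (2:ℕ) ∣ 4 by norm_num) (ZMod 2))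
          (2 : Polynomial (ZMod 4))) = 0 := by
        rw [Polynomial.map_ofNat]
        have : (2 : Polynomial (ZMod 2)) = Polynomial.C 2 := (map_ofNat Polynomial.C 2).symm
        rw [this, show (2 : ZMod 2) = 0 by decide, map_zero]
      rw [h20, zero_mul, add_zero]
  have hann : ∀ x : AdjoinRoot f, 2 * x = 0 → ∃ y, x = 2 * y := by
    intro x h2x
    obtain ⟨p, rfl⟩ := AdjoinRoot.mk_surjective x
    have h0 : AdjoinRoot.mk f (2 * p) = 0 := by rw [map_mul, map_ofNat]; exact h2x
    rw [AdjoinRoot.mk_eq_zero] at h0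
    obtain ⟨g, hg⟩ := h0
    have hmap : (f.map (ZMod.castHom (show (2:ℕ) ∣ 4 by norm_num) (ZMod 2))) *
        (g.map (ZMod.castHom (show (2:ℕ) ∣ 4 by norm_num) (ZMod 2))) = 0 := by
      rw [← Polynomial.map_mul, ← hg, Polynomial.map_mul]
      have h20 : (Polynomial.map (ZMod.castHom (show (2:ℕ) ∣ 4 by norm_num) (ZMod 2))
          (2 : Polynomial (ZMod 4))) = 0 := by
        rw [Polynomial.map_ofNat]
        have : (2 : Polynomial (ZMod 2)) = Polynomial.C 2 := (map_ofNat Polynomial.C 2).symm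
        rw [this, show (2 : ZMod 2) = 0 by decide, map_zero]
      rw [h20, zero_mul]
    have hg0 : g.map (ZMod.castHom (show (2:ℕ) ∣ 4 by norm_num) (ZMod 2)) = 0 := by
      rcases mul_eq_zero.1 hmap with h | h
      · exact absurd h hmonic2.ne_zero
      · exact h
    have hrg : ∀ n, 2 * g.coeff n = 0 := fun n => (hc2ker _).1
      (by rw [← Polynomial.coeff_map, hg0, Polynomial.coeff_zero])
    obtain ⟨u, hu⟩ := half_lemma g hrg
    rw [hC2] at hu
    have hpf2 : ∀ n, 2 * (p - f * u).coeff n = 0 := by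
      intro n
      have hzero : Polynomial.C (2 : ZMod 4) * (p - f * u) = 0 := by
        rw [hC2]
        linear_combination hg + f * hu
      have := congrArg (fun r => Polynomial.coeff r n) hzero
      simpa [Polynomial.coeff_C_mul] using this
    obtain ⟨v, hv⟩ := half_lemma _ hpf2
    refine ⟨AdjoinRoot.mk f v, ?_⟩
    have hp : p = f * u + Polynomial.C 2 * v := by linear_combination hv
    rw [hp, map_add, map_mul, AdjoinRoot.mk_self, zero_mul, zero_add, hC2, map_mul,
      map_ofNat]
  let S : GRSetup (AdjoinRoot f)
      (AdjoinRoot (f.map (ZMod.castHom (show (2:ℕ) ∣ 4 by norm_num) (ZMod 2)))) :=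
    ⟨π, hsurj, h22, hker, hann⟩
  have habs := S.abstract_count C
  rw [hcardK] at habs
  have e1 : 2 * 2 ^ m = 2 ^ (m + 1) := by rw [pow_succ]; ring
  have e2 : 2 ^ m * 2 ^ m = 2 ^ (2 * m) := by rw [two_mul, pow_add]
  rw [e1, e2] at habs
  convert habs using 3
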